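/- For every n ≥ 1 and every subset I ⊆ {1,...,n-1}, the number of permutations σ of {1,...,n} whose succession set {i ∈ [n-1] : σ(i)+1 = σ(i+1)} equals I is the same as the number of permutations σ of {1,...,n} whose set of fixed points distinct from n, {i ∈ [n-1] : σ(i) = i}, equals I. -/

import Mathlib

open Finset

/-- Successions: positions `i` (0-based) such that `τ(i)+1 = τ(i+1)`. -/
def Suc {n : ℕ} (τ : Equiv.Perm (Fin n)) : Finset (Fin n) :=
  univ.filter (fun i => ∃ j : Fin n, (j : ℕ) = (i : ℕ) + 1 ∧ (τ i : ℕ) + 1 = (τ j : ℕ))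

/-- Non-adjacent successions: positions `i` such that `τ(i)+1` occurs at some
position `j ≥ i+2`. -/
def najSuc {n : ℕ} (τ : Equiv.Perm (Fin n)) : Finset (Fin n) :=
  univ.filter (fun i => ∃ j : Fin n, (i : ℕ) + 2 ≤ (j : ℕ) ∧ (τ j : ℕ) = (τ i : ℕ) + 1)

/-- Predecessors: positions `i` such that `τ(i)+1` occurs at some earlier position. -/
def PredSet {n : ℕ} (τ : Equiv.Perm (Fin n)) : Finset (Fin n) :=
  univ.filter (fun i => ∃ j : Fin n, j < i ∧ (τ j : ℕ) = (τ i : ℕ) + 1)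

/-- Fixed points distinct from the last position. -/
def Fixbar {n : ℕ} (σ : Equiv.Perm (Fin n)) : Finset (Fin n) :=
  univ.filter (fun i => (i : ℕ) + 1 < n ∧ σ i = i)

/-- Drop values `σ(i) < i` over positions other than the last. -/
def Dropbar {n : ℕ} (σ : Equiv.Perm (Fin n)) : Finset (Fin n) :=
  univ.filter (fun v => ∃ i : Fin n, (i : ℕ) + 1 < n ∧ σ i = v ∧ (σ i : ℕ) < (i : ℕ))

/-- Excedance values `σ(i) > i` over positions other than the last. -/
def Excbar {n : ℕ} (σ : Equiv.Perm (Fin n)) : Finset (Fin n) :=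
  univ.filter (fun v => ∃ i : Fin n, (i : ℕ) + 1 < n ∧ σ i = v ∧ (i : ℕ) < (σ i : ℕ))

namespace DEGaux

open Equiv

variable {n : ℕ}

-- (helpers assumed; will paste together later)
lemma val_succAbove (v : Fin (n+1)) (a : Fin n) :
    ((v.succAbove a) : ℕ) = if (a : ℕ) < (v : ℕ) then (a : ℕ) else (a : ℕ) + 1 := by
  rcases lt_or_ge (Fin.castSucc a) v with h | h
  · rw [Fin.succAbove_of_castSucc_lt _ _ h]
    have h' : (a : ℕ) < (v : ℕ) := by simpa using (Fin.lt_def.mp h)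
    simp [h']
  · rw [Fin.succAbove_of_le_castSucc _ _ h]
    have h' : (v : ℕ) ≤ (a : ℕ) := by simpa using (Fin.le_def.mp h)
    simp [Fin.val_succ, Nat.not_lt.mpr h']

def remap (p v : Fin (n+1)) (σ' : Perm (Fin n)) : Perm (Fin (n+1)) :=
  (finSuccEquiv' p).trans ((Equiv.optionCongr σ').trans (finSuccEquiv' v).symm)

lemma remap_apply_eq (p v : Fin (n+1)) (σ' : Perm (Fin n)) : remap p v σ' p = v := by
  simp [remap, finSuccEquiv'_at, finSuccEquiv'_symm_none]

lemma remap_apply_succAbove (p v : Fin (n+1)) (σ' : Perm (Fin n)) (x : Fin n) :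
    remap p v σ' (p.succAbove x) = v.succAbove (σ' x) := by
  simp [remap, finSuccEquiv'_succAbove, finSuccEquiv'_symm_some]

def dmap (p : Fin (n+1)) (σ : Perm (Fin (n+1))) : Perm (Fin n) :=
  Equiv.removeNone ((finSuccEquiv' p).symm.trans (σ.trans (finSuccEquiv' (σ p))))

lemma dmap_spec (p : Fin (n+1)) (σ : Perm (Fin (n+1))) (x : Fin n) :
    (σ p).succAbove (dmap p σ x) = σ (p.succAbove x) := by
  have hne : σ (p.succAbove x) ≠ σ p := fun h => Fin.succAbove_ne p x (σ.injective h)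
  obtain ⟨z, hz⟩ := Fin.exists_succAbove_eq hne
  have h : ((finSuccEquiv' p).symm.trans (σ.trans (finSuccEquiv' (σ p)))) (some x) = some z := by
    simp only [Equiv.trans_apply, finSuccEquiv'_symm_some]
    rw [← hz, finSuccEquiv'_succAbove]
  have h2 := Equiv.removeNone_some _ ⟨z, h⟩
  rw [h] at h2
  have h3 : dmap p σ x = z := Option.some_injective _ h2
  rw [h3, hz]

lemma dmap_val (p : Fin (n+1)) (σ : Perm (Fin (n+1))) (x : Fin n) :
    (if ((dmap p σ x : Fin n) : ℕ) < ((σ p : Fin (n+1)) : ℕ)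
      then ((dmap p σ x : Fin n) : ℕ) else ((dmap p σ x : Fin n) : ℕ) + 1)
      = ((σ (p.succAbove x) : Fin (n+1)) : ℕ) := by
  rw [← dmap_spec p σ x, val_succAbove]

section Step

variable (n' : ℕ) (J : Finset (Fin (n'+1))) (m : Fin (n'+1))

lemma stepA (hmJ : m ∈ J) (hmax : ∀ i ∈ J, (i : ℕ) ≤ (m : ℕ)) (hm : (m : ℕ) + 1 < n' + 1) :
    (univ.filter (fun σ : Perm (Fin (n'+1)) => ∀ i ∈ J, ∃ j : Fin (n'+1),
        (j : ℕ) = (i : ℕ) + 1 ∧ ((σ i : Fin (n'+1)) : ℕ) + 1 = ((σ j : Fin (n'+1)) : ℕ))).card =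
    (univ.filter (fun σ : Perm (Fin n') => ∀ x ∈ univ.filter
          (fun x : Fin n' => x.castSucc ∈ J.erase m), ∃ j : Fin n',
        (j : ℕ) = (x : ℕ) + 1 ∧ ((σ x : Fin n') : ℕ) + 1 = ((σ j : Fin n') : ℕ))).card := by
  have hmn : (m : ℕ) < n' := by omega
  set p : Fin (n'+1) := ⟨(m : ℕ) + 1, hm⟩ with hp
  set m' : Fin n' := ⟨(m : ℕ), hmn⟩ with hm'
  have hlow : ∀ x : Fin n', (x : ℕ) < (m : ℕ) + 1 → p.succAbove x = Fin.castSucc x := by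
    intro x hx
    exact Fin.succAbove_of_castSucc_lt _ _ (by simp [Fin.lt_def, hp]; omega)
  have hpm : p.succAbove m' = m := by
    rw [hlow m' (by simp [hm'])]
    exact Fin.ext (by simp [hm'])
  -- value of σ p for σ in the big set
  have hv : ∀ σ : Perm (Fin (n'+1)),
      (∀ i ∈ J, ∃ j : Fin (n'+1), (j : ℕ) = (i : ℕ) + 1 ∧ ((σ i : Fin (n'+1)) : ℕ) + 1
        = ((σ j : Fin (n'+1)) : ℕ)) →
      ((σ m : Fin (n'+1)) : ℕ) + 1 = ((σ p : Fin (n'+1)) : ℕ) := by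
    intro σ hσ
    obtain ⟨j, hj1, hj2⟩ := hσ m hmJ
    have : j = p := Fin.ext (by simp [hp, hj1])
    rwa [this] at hj2
  apply Finset.card_bij' (fun σ _ => dmap p σ)
      (fun σ' _ => remap p ((σ' m').succ) σ')
  · -- forward membership
    intro σ hσ
    simp only [mem_filter, mem_univ, true_and] at hσ ⊢
    intro x hx
    rw [Finset.mem_erase] at hx
    obtain ⟨hxne, hxJ⟩ := hx
    have hxm : (x : ℕ) < (m : ℕ) := by
      have h1 : (x : ℕ) ≤ (m : ℕ) := by simpa using hmax _ hxJ
      have h2 : (x : ℕ) ≠ (m : ℕ) := fun h => hxne (Fin.ext (by simpa using h))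
      omega
    obtain ⟨j, hj1, hj2⟩ := hσ (Fin.castSucc x) hxJ
    set x₁ : Fin n' := ⟨(x : ℕ) + 1, by omega⟩ with hx₁
    have hsx : p.succAbove x = Fin.castSucc x := hlow x (by omega)
    have hsx₁ : p.succAbove x₁ = j := by
      rw [hlow x₁ (by simp [hx₁]; omega)]
      exact Fin.ext (by simp [hx₁, hj1])
    refine ⟨x₁, by simp [hx₁], ?_⟩
    have e1 := dmap_val p σ x
    have e2 := dmap_val p σ x₁
    rw [hsx] at e1
    rw [hsx₁] at e2
    have hnc : ((σ j : Fin (n'+1)) : ℕ) ≠ ((σ p : Fin (n'+1)) : ℕ) := by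
      intro h
      have : j = p := σ.injective (Fin.ext h)
      rw [hp] at this
      have := congrArg Fin.val this
      simp [hj1] at this
      omega
    split_ifs at e1 e2 <;> omega
  · -- backward membership
    intro σ' hσ'
    simp only [mem_filter, mem_univ, true_and] at hσ' ⊢
    intro i hi
    by_cases him : i = m
    · subst him
      refine ⟨p, by simp [hp], ?_⟩
      have h1 : remap p ((σ' m').succ) σ' i = ((σ' m').succ).succAbove (σ' m') := by
        rw [← hpm, remap_apply_succAbove]
      have h2 : remap p ((σ' m').succ) σ' p = (σ' m').succ := remap_apply_eq _ _ _
      rw [h1, h2, val_succAbove]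
      simp only [Fin.val_succ]
      split_ifs <;> omega
    · have hxm : (i : ℕ) < (m : ℕ) := by
        have h1 : (i : ℕ) ≤ (m : ℕ) := hmax _ hi
        have h2 : (i : ℕ) ≠ (m : ℕ) := fun h => him (Fin.ext h)
        omega
      set x : Fin n' := ⟨(i : ℕ), by omega⟩ with hx
      have hxv : (x : ℕ) = (i : ℕ) := by simp [hx]
      have hcx : Fin.castSucc x = i := Fin.ext (by simp [hx])
      have hxJ' : x.castSucc ∈ J.erase m := by
        rw [hcx]
        exact Finset.mem_erase.mpr ⟨him, hi⟩
      obtain ⟨x₁, hx11, hx12⟩ := hσ' x hxJ'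
      refine ⟨Fin.castSucc x₁, by simp [hx11, hxv], ?_⟩
      have h1 : remap p ((σ' m').succ) σ' i = ((σ' m').succ).succAbove (σ' x) := by
        rw [← hcx, ← hlow x (by omega), remap_apply_succAbove]
      have h2 : remap p ((σ' m').succ) σ' (Fin.castSucc x₁) = ((σ' m').succ).succAbove (σ' x₁) := by
        rw [← hlow x₁ (by rw [hx11, hxv]; omega), remap_apply_succAbove]
      have hnc : ((σ' x : Fin n') : ℕ) ≠ ((σ' m' : Fin n') : ℕ) := by
        intro h
        have hxeq : x = m' := σ'.injective (Fin.ext h)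
        have : (i : ℕ) = (m : ℕ) := by simpa [hx, hm'] using congrArg Fin.val hxeq
        omega
      rw [h1, h2, val_succAbove, val_succAbove]
      simp only [Fin.val_succ]
      split_ifs <;> omega
  · -- left inverse
    intro σ hσ
    simp only [mem_filter, mem_univ, true_and] at hσ
    have hvσ := hv σ hσ
    have hvv : ((dmap p σ m').succ) = σ p := by
      have e := dmap_val p σ m'
      rw [hpm] at e
      apply Fin.ext
      simp only [Fin.val_succ]
      split_ifs at e <;> omega
    apply Equiv.ext
    intro y
    rcases eq_or_ne y p with rfl | hy
    · rw [remap_apply_eq, hvv]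
    · obtain ⟨x, rfl⟩ := Fin.exists_succAbove_eq hy
      rw [remap_apply_succAbove, hvv]
      exact dmap_spec p σ x
  · -- right inverse
    intro σ' hσ'
    have hτp : remap p ((σ' m').succ) σ' p = (σ' m').succ := remap_apply_eq _ _ _
    apply Equiv.ext
    intro x
    have h1 := dmap_spec p (remap p ((σ' m').succ) σ') x
    rw [hτp, remap_apply_succAbove] at h1
    exact Fin.succAbove_right_injective h1

lemma stepB (hmJ : m ∈ J) (hmax : ∀ i ∈ J, (i : ℕ) ≤ (m : ℕ)) (hm : (m : ℕ) + 1 < n' + 1) :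
    (univ.filter (fun σ : Perm (Fin (n'+1)) => ∀ i ∈ J, σ i = i)).card =
    (univ.filter (fun σ : Perm (Fin n') => ∀ x ∈ univ.filter
          (fun x : Fin n' => x.castSucc ∈ J.erase m), σ x = x)).card := by
  have hmn : (m : ℕ) < n' := by omega
  have hlow : ∀ x : Fin n', (x : ℕ) < (m : ℕ) → m.succAbove x = Fin.castSucc x := by
    intro x hx
    exact Fin.succAbove_of_castSucc_lt _ _ (by simp [Fin.lt_def]; omega)
  apply Finset.card_bij' (fun σ _ => dmap m σ) (fun σ' _ => remap m m σ')
  · intro σ hσ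
    simp only [mem_filter, mem_univ, true_and] at hσ ⊢
    intro x hx
    rw [Finset.mem_erase] at hx
    obtain ⟨hxne, hxJ⟩ := hx
    have hxm : (x : ℕ) < (m : ℕ) := by
      have h1 : (x : ℕ) ≤ (m : ℕ) := by simpa using hmax _ hxJ
      have h2 : (x : ℕ) ≠ (m : ℕ) := fun h => hxne (Fin.ext (by simpa using h))
      omega
    have hσm : σ m = m := hσ m hmJ
    have h1 := dmap_spec m σ x
    rw [hσm, hlow x hxm, hσ _ hxJ, ← hlow x hxm] at h1
    exact Fin.succAbove_right_injective h1
  · intro σ' hσ'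
    simp only [mem_filter, mem_univ, true_and] at hσ' ⊢
    intro i hi
    by_cases him : i = m
    · subst him; exact remap_apply_eq _ _ _
    · have hxm : (i : ℕ) < (m : ℕ) := by
        have h1 : (i : ℕ) ≤ (m : ℕ) := hmax _ hi
        have h2 : (i : ℕ) ≠ (m : ℕ) := fun h => him (Fin.ext h)
        omega
      set x : Fin n' := ⟨(i : ℕ), by omega⟩ with hx
      have hxv : (x : ℕ) = (i : ℕ) := by simp [hx]
      have hcx : Fin.castSucc x = i := Fin.ext (by simp [hx])
      have hfix : σ' x = x := hσ' x (by rw [hcx]; exact Finset.mem_erase.mpr ⟨him, hi⟩)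
      have : remap m m σ' i = m.succAbove (σ' x) := by
        rw [← hcx, ← hlow x (by omega), remap_apply_succAbove]
      rw [this, hfix, hlow x (by omega), hcx]
  · intro σ hσ
    simp only [mem_filter, mem_univ, true_and] at hσ
    have hσm : σ m = m := hσ m hmJ
    apply Equiv.ext
    intro y
    rcases eq_or_ne y m with rfl | hy
    · rw [remap_apply_eq, hσm]
    · obtain ⟨x, rfl⟩ := Fin.exists_succAbove_eq hy
      rw [remap_apply_succAbove]
      have := dmap_spec m σ x
      rwa [hσm] at this
  · intro σ' hσ'
    have hτ : remap m m σ' m = m := remap_apply_eq _ _ _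
    apply Equiv.ext
    intro x
    have h1 := dmap_spec m (remap m m σ') x
    rw [hτ, remap_apply_succAbove] at h1
    exact Fin.succAbove_right_injective h1

end Step

lemma core : ∀ (k : ℕ) {n : ℕ} (J : Finset (Fin n)), (∀ i ∈ J, (i : ℕ) + 1 < n) → J.card = k →
    (univ.filter (fun σ : Perm (Fin n) => ∀ i ∈ J, ∃ j : Fin n,
        (j : ℕ) = (i : ℕ) + 1 ∧ ((σ i : Fin n) : ℕ) + 1 = ((σ j : Fin n) : ℕ))).card =
    (univ.filter (fun σ : Perm (Fin n) => ∀ i ∈ J, σ i = i)).card := by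
  intro k
  induction k with
  | zero =>
    intro n J hJ hc
    have hJ0 : J = ∅ := Finset.card_eq_zero.mp hc
    subst hJ0
    simp
  | succ k ih =>
    intro n J hJ hc
    have hne : J.Nonempty := Finset.card_pos.mp (by omega)
    set m := J.max' hne with hmdef
    have hmJ : m ∈ J := J.max'_mem hne
    have hmax : ∀ i ∈ J, (i : ℕ) ≤ (m : ℕ) := fun i hi => J.le_max' i hi
    have hm : (m : ℕ) + 1 < n := hJ m hmJ
    obtain ⟨n', rfl⟩ : ∃ n', n = n' + 1 := ⟨n - 1, by omega⟩
    rw [stepA n' J m hmJ hmax hm, stepB n' J m hmJ hmax hm]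
    have hcard : (univ.filter (fun x : Fin n' => x.castSucc ∈ J.erase m)).card = k := by
      have h1 : (univ.filter (fun x : Fin n' => x.castSucc ∈ J.erase m)).card
          = (J.erase m).card := by
        apply Finset.card_bij (fun x _ => Fin.castSucc x)
        · intro x hx
          exact (Finset.mem_filter.mp hx).2
        · intro x₁ h₁ x₂ h₂ h
          exact Fin.castSucc_injective _ h
        · intro y hy
          have hym : (y : ℕ) < (m : ℕ) := by
            have h1 : (y : ℕ) ≤ (m : ℕ) := hmax _ (Finset.mem_of_mem_erase hy)
            have h2 : (y : ℕ) ≠ (m : ℕ) := fun h =>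
              (Finset.ne_of_mem_erase hy) (Fin.ext h)
            omega
          refine ⟨⟨(y : ℕ), by omega⟩, ?_, Fin.ext (by simp)⟩
          rw [Finset.mem_filter]
          refine ⟨mem_univ _, ?_⟩
          have : Fin.castSucc (⟨(y : ℕ), by omega⟩ : Fin n') = y := Fin.ext (by simp)
          rw [this]
          exact hy
      rw [h1, Finset.card_erase_of_mem hmJ, hc]
      omega
    apply ih
    · intro x hx
      rw [Finset.mem_filter] at hx
      have hxm : (x : ℕ) < (m : ℕ) := by
        have h1 : (x : ℕ) ≤ (m : ℕ) := by simpa using hmax _ (Finset.mem_of_mem_erase hx.2)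
        have h2 : (x : ℕ) ≠ (m : ℕ) := fun h =>
          (Finset.ne_of_mem_erase hx.2) (Fin.ext (by simpa using h))
        omega
      omega
    · exact hcard

section Outer

variable {n : ℕ}

def U (n : ℕ) : Finset (Fin n) := univ.filter (fun i => (i : ℕ) + 1 < n)

lemma mem_U {i : Fin n} : i ∈ U n ↔ (i : ℕ) + 1 < n := by
  simp [U]

lemma suc_subset_U (σ : Perm (Fin n)) : Suc σ ⊆ U n := by
  intro i hi
  rw [Suc, Finset.mem_filter] at hi
  obtain ⟨-, j, hj, -⟩ := hi
  rw [mem_U, ← hj]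
  exact j.isLt

lemma fix_subset_U (σ : Perm (Fin n)) : Fixbar σ ⊆ U n := by
  intro i hi
  rw [Fixbar, Finset.mem_filter] at hi
  exact mem_U.mpr hi.2.1

lemma aggA (I : Finset (Fin n)) (hIU : I ⊆ U n) :
    (univ.filter (fun σ : Perm (Fin n) => ∀ i ∈ I, ∃ j : Fin n,
        (j : ℕ) = (i : ℕ) + 1 ∧ ((σ i : Fin n) : ℕ) + 1 = ((σ j : Fin n) : ℕ))).card
    = ∑ K ∈ (U n).powerset.filter (fun K => I ⊆ K),
        (univ.filter (fun σ : Perm (Fin n) => Suc σ = K)).card := by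
  have h0 : (univ.filter (fun σ : Perm (Fin n) => ∀ i ∈ I, ∃ j : Fin n,
      (j : ℕ) = (i : ℕ) + 1 ∧ ((σ i : Fin n) : ℕ) + 1 = ((σ j : Fin n) : ℕ)))
      = univ.filter (fun σ : Perm (Fin n) => I ⊆ Suc σ) := by
    apply Finset.filter_congr
    intro σ _
    simp [Suc, Finset.subset_iff, Finset.mem_filter]
  rw [h0]
  rw [Finset.card_eq_sum_card_fiberwise
    (f := fun σ => Suc σ) (t := (U n).powerset.filter (fun K => I ⊆ K))
    (fun σ hσ => by
      rw [Finset.mem_coe, Finset.mem_filter] at hσ ⊢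
      exact ⟨Finset.mem_powerset.mpr (suc_subset_U σ), hσ.2⟩)]
  apply Finset.sum_congr rfl
  intro K hK
  rw [Finset.mem_filter, Finset.mem_powerset] at hK
  congr 1
  rw [Finset.filter_filter]
  apply Finset.filter_congr
  intro σ _
  constructor
  · intro h; exact h.2
  · intro h; exact ⟨h ▸ hK.2, h⟩

lemma aggB (I : Finset (Fin n)) (hIU : I ⊆ U n) :
    (univ.filter (fun σ : Perm (Fin n) => ∀ i ∈ I, σ i = i)).card
    = ∑ K ∈ (U n).powerset.filter (fun K => I ⊆ K),
        (univ.filter (fun σ : Perm (Fin n) => Fixbar σ = K)).card := by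
  have h0 : (univ.filter (fun σ : Perm (Fin n) => ∀ i ∈ I, σ i = i))
      = univ.filter (fun σ : Perm (Fin n) => I ⊆ Fixbar σ) := by
    apply Finset.filter_congr
    intro σ _
    simp only [Fixbar, Finset.subset_iff, Finset.mem_filter, mem_univ, true_and]
    constructor
    · intro h i hi
      exact ⟨mem_U.mp (hIU hi), h i hi⟩
    · intro h i hi
      exact (h hi).2
  rw [h0]
  rw [Finset.card_eq_sum_card_fiberwise
    (f := fun σ => Fixbar σ) (t := (U n).powerset.filter (fun K => I ⊆ K))
    (fun σ hσ => by
      rw [Finset.mem_coe, Finset.mem_filter] at hσ ⊢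
      exact ⟨Finset.mem_powerset.mpr (fix_subset_U σ), hσ.2⟩)]
  apply Finset.sum_congr rfl
  intro K hK
  rw [Finset.mem_filter, Finset.mem_powerset] at hK
  congr 1
  rw [Finset.filter_filter]
  apply Finset.filter_congr
  intro σ _
  constructor
  · intro h; exact h.2
  · intro h; exact ⟨h ▸ hK.2, h⟩

lemma down : ∀ (d : ℕ) (I : Finset (Fin n)), I ⊆ U n → ((U n) \ I).card ≤ d →
    (univ.filter (fun σ : Perm (Fin n) => Suc σ = I)).card
      = (univ.filter (fun σ : Perm (Fin n) => Fixbar σ = I)).card := by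
  intro d
  induction d with
  | zero =>
    intro I hIU hd
    have hUI : U n ⊆ I := by
      have : (U n \ I) = ∅ := Finset.card_eq_zero.mp (Nat.le_zero.mp hd)
      rwa [Finset.sdiff_eq_empty_iff_subset] at this
    have ht : (U n).powerset.filter (fun K => I ⊆ K) = {I} := by
      ext K
      simp only [Finset.mem_filter, Finset.mem_powerset, Finset.mem_singleton]
      constructor
      · rintro ⟨h1, h2⟩; exact Finset.Subset.antisymm (h1.trans hUI) h2
      · rintro rfl; exact ⟨hIU, subset_rfl⟩
    have hA := aggA I hIU
    have hB := aggB I hIU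
    rw [ht, Finset.sum_singleton] at hA hB
    rw [← hA, ← hB]
    exact core I.card I (fun i hi => mem_U.mp (hIU hi)) rfl
  | succ d ihd =>
    intro I hIU hd
    have hA := aggA I hIU
    have hB := aggB I hIU
    have hIt : I ∈ (U n).powerset.filter (fun K => I ⊆ K) := by
      rw [Finset.mem_filter, Finset.mem_powerset]
      exact ⟨hIU, subset_rfl⟩
    rw [← Finset.add_sum_erase _ _ hIt] at hA hB
    have hcore := core I.card I (fun i hi => mem_U.mp (hIU hi)) rfl
    have hsum : ∑ K ∈ ((U n).powerset.filter (fun K => I ⊆ K)).erase I,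
          (univ.filter (fun σ : Perm (Fin n) => Suc σ = K)).card
        = ∑ K ∈ ((U n).powerset.filter (fun K => I ⊆ K)).erase I,
          (univ.filter (fun σ : Perm (Fin n) => Fixbar σ = K)).card := by
      apply Finset.sum_congr rfl
      intro K hK
      have hKne : K ≠ I := Finset.ne_of_mem_erase hK
      have hK' := Finset.mem_of_mem_erase hK
      rw [Finset.mem_filter, Finset.mem_powerset] at hK'
      apply ihd K hK'.1
      have h1 : (U n \ K).card = (U n).card - K.card := Finset.card_sdiff_of_subset hK'.1
      have h2 : (U n \ I).card = (U n).card - I.card := Finset.card_sdiff_of_subset hIU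
      have h3 : I.card < K.card :=
        Finset.card_lt_card (Finset.ssubset_iff_subset_ne.mpr ⟨hK'.2, (Ne.symm hKne)⟩)
      have h4 : K.card ≤ (U n).card := Finset.card_le_card hK'.1
      omega
    omega

end Outer

end DEGaux


/-- Diaconis-Evans-Graham: for any set I of positions (other than the last one),
the number of permutations with succession set I equals the number of permutations
whose set of fixed points distinct from the last position is I. -/
theorem stmt_0 (n : ℕ) (hn : 1 ≤ n) (I : Finset (Fin n)) (hI : ∀ i ∈ I, (i : ℕ) + 1 < n) :
    ((Finset.univ : Finset (Equiv.Perm (Fin n))).filter (fun σ => Suc σ = I)).card =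
    ((Finset.univ : Finset (Equiv.Perm (Fin n))).filter (fun σ => Fixbar σ = I)).card := by
  have hIU : I ⊆ DEGaux.U n := fun i hi => DEGaux.mem_U.mpr (hI i hi)
  exact DEGaux.down ((DEGaux.U n \ I).card) I hIU le_rfl
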